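/- If r > 1 and γ̄ < 2·b̲, then the fixed point x_r* = 1/(γ̄ + 2·b̲) of f is globally attracting: for every x ≥ 0 the iterates fⁿ(x) converge to x_r* as n → ∞. In particular f has no 2-cycle: if x ≥ 0 satisfies f(f(x)) = x, then x = x_r*. -/

import Mathlib

set_option maxHeartbeats 1000000 in
theorem right_fixed_point_globally_attracting
    (bU bL gU gL r xl xu xm : ℝ) (f : ℝ → ℝ)
    (h1 : bU ≥ gU) (h2 : gU ≥ bL) (h3 : bL ≥ gL) (h4 : gL ≥ 0)
    (h5 : 0 < bL) (h6 : bL < bU) (h7 : gL < gU)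
    (hr : r = (gU - gL) / (bU - bL))
    (hxl : xl = 1 / (gL + 2 * bU * r))
    (hxu : xu = 1 / (gU + 2 * bL * r))
    (hxm : xm = 1 / gU)
    (hf1 : ∀ x : ℝ, 0 ≤ x → x ≤ xl → f x = (1 - gL * x) / (2 * bU))
    (hf2 : ∀ x : ℝ, xl ≤ x → x ≤ xu → f x = r * x)
    (hf3 : ∀ x : ℝ, xu ≤ x → x ≤ xm → f x = (1 - gU * x) / (2 * bL))
    (hf4 : ∀ x : ℝ, xm ≤ x → f x = 0)
    (hrgt : 1 < r) (hslope : gU < 2 * bL) :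
    f (1 / (gU + 2 * bL)) = 1 / (gU + 2 * bL) ∧
    (∀ x : ℝ, 0 ≤ x →
      Filter.Tendsto (fun n => f^[n] x) Filter.atTop (nhds (1 / (gU + 2 * bL)))) ∧
    (∀ x : ℝ, 0 ≤ x → f (f x) = x → x = 1 / (gU + 2 * bL)) := by
  have hbU : 0 < bU := lt_trans h5 h6
  have hgU0 : 0 < gU := lt_of_lt_of_le h5 h2
  have hr0 : (0:ℝ) < r := lt_trans one_pos hrgt
  have hrc : r * (bU - bL) = gU - gL := by
    rw [hr]; exact div_mul_cancel₀ _ (ne_of_gt (by linarith : (0:ℝ) < bU - bL))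
  have hD2 : (0:ℝ) < gU + 2 * bL := by linarith
  have hD1 : (0:ℝ) < gU + 2 * bL * r := by nlinarith
  have hD0 : (0:ℝ) < gL + 2 * bU * r := by nlinarith
  set xs : ℝ := 1 / (gU + 2 * bL) with hxs
  set q : ℝ := gU / (2 * bL) with hq
  have hq0 : 0 < q := by rw [hq]; positivity
  have hq1 : q < 1 := by rw [hq, div_lt_one (by linarith)]; linarith
  have hxs0 : 0 < xs := by rw [hxs]; positivity
  have hxl0 : 0 < xl := by rw [hxl]; exact one_div_pos.mpr hD0
  have hxu0 : 0 < xu := by rw [hxu]; exact one_div_pos.mpr hD1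
  have hxm0 : 0 < xm := by rw [hxm]; exact one_div_pos.mpr hgU0
  have hxlxu : xl ≤ xu := by
    rw [hxl, hxu]
    apply one_div_le_one_div_of_le hD1
    nlinarith
  have hxuxs : xu < xs := by
    rw [hxu, hxs]
    apply one_div_lt_one_div_of_lt hD2
    nlinarith
  have hxsxm : xs < xm := by
    rw [hxs, hxm]
    apply one_div_lt_one_div_of_lt hgU0
    linarith
  set T : ℝ := xs + (xs - xu) / q with hT
  have hqT : q * (T - xs) = xs - xu := by
    rw [hT]; field_simp; ring
  have hqxm : q * (xm - xs) = xs := by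
    rw [hq, hxm, hxs]; field_simp; ring
  have hxsT : xs < T := by
    rw [hT]
    have : 0 < (xs - xu) / q := div_pos (by linarith) hq0
    linarith
  have hTxm : T < xm := by nlinarith [hqT, hqxm, hxu0]
  -- key algebraic identities for the three interval endpoints
  have e0 : xl * (gL + 2 * bU * r) = 1 := by rw [hxl]; field_simp
  have e1 : xu * (gU + 2 * bL * r) = 1 := by rw [hxu]; field_simp
  have e2 : xs * (gU + 2 * bL) = 1 := by rw [hxs]; field_simp
  -- r * xu ≤ T
  have hrxuT : r * xu ≤ T := by
    have key2 : gU * (r * xu - xs) ≤ 2 * bL * (xs - xu) := by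
      nlinarith [e1, e2, mul_pos (mul_pos (sub_pos.mpr hrgt) (sub_pos.mpr hslope)) hxu0]
    have key : q * (r * xu - xs) ≤ xs - xu := by
      rw [hq, div_mul_eq_mul_div, div_le_iff₀ (by linarith : (0:ℝ) < 2 * bL)]
      nlinarith [key2]
    have h' : q * (r * xu - xs) ≤ q * (T - xs) := by rw [hqT]; exact key
    have := le_of_mul_le_mul_left h' hq0
    linarith
  -- branch 3 in contraction form
  have hf3' : ∀ x : ℝ, xu ≤ x → x ≤ xm → f x = xs - q * (x - xs) := by
    intro x ha hb
    rw [hf3 x ha hb, hq, hxs]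
    field_simp
    ring
  -- branch 1 value at xl
  have hyxl : (1 - gL * xl) / (2 * bU) = r * xl := by
    rw [div_eq_iff (by linarith : (2:ℝ) * bU ≠ 0)]
    nlinarith [e0]
  have hrxl : xl < r * xl := by nlinarith [hxl0]
  -- bounds for the branch-1 image
  have hylo : ∀ z : ℝ, z ≤ xl → r * xl ≤ (1 - gL * z) / (2 * bU) := by
    intro z hz
    rw [← hyxl]
    have hnum : 1 - gL * xl ≤ 1 - gL * z := by nlinarith [mul_le_mul_of_nonneg_left hz h4]
    exact (div_le_div_iff_of_pos_right (by linarith : (0:ℝ) < 2 * bU)).mpr hnum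
  have hyhi : ∀ z : ℝ, 0 ≤ z → (1 - gL * z) / (2 * bU) ≤ xm := by
    intro z hz
    have h1' : (1 - gL * z) / (2 * bU) ≤ 1 / (2 * bU) := by
      apply (div_le_div_iff_of_pos_right (by linarith : (0:ℝ) < 2 * bU)).mpr
      nlinarith [mul_nonneg h4 hz]
    have h2' : 1 / (2 * bU) ≤ xm := by
      rw [hxm]
      exact one_div_le_one_div_of_le hgU0 (by linarith)
    linarith
  -- the escape gap ε
  set ε : ℝ := xs - q * (r * xl - xs) - xl with hε
  have hS : 2 * bL + gU * r < gL + 2 * bU * r := by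
    nlinarith [hrc, mul_pos (sub_pos.mpr hrgt) (sub_pos.mpr hslope)]
  have heps : 0 < ε := by
    rw [hε, hq]
    have key : gU / (2 * bL) * (r * xl - xs) < xs - xl := by
      rw [div_mul_eq_mul_div, div_lt_iff₀ (by linarith : (0:ℝ) < 2 * bL)]
      nlinarith [e0, e2, mul_lt_mul_of_pos_left hS hxl0]
    linarith
  -- two-step growth on the loop region
  have hgrow : ∀ z : ℝ, 0 ≤ z → z ≤ xl →
      z + ε ≤ xs - q * ((1 - gL * z) / (2 * bU) - xs) := by
    intro z hz0 hzl
    have hfac : 0 ≤ 1 - q * (gL / (2 * bU)) := by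
      have h1' : q * (gL / (2 * bU)) ≤ 1 * 1 := by
        apply mul_le_mul hq1.le ?_ (by positivity) (by linarith)
        rw [div_le_one (by linarith : (0:ℝ) < 2 * bU)]
        linarith
      linarith
    have id1 : xs - q * ((1 - gL * z) / (2 * bU) - xs) - (z + ε)
        = (xl - z) * (1 - q * (gL / (2 * bU))) := by
      rw [hε, ← hyxl]
      field_simp
      ring
    linarith [mul_nonneg (by linarith : (0:ℝ) ≤ xl - z) hfac, id1]
  classical
  -- climbing through the middle branch
  have Lclimb : ∀ z : ℝ, xl ≤ z → z < xu → ∃ k, xu ≤ f^[k] z ∧ f^[k] z ≤ T := by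
    intro z hz1 hz2
    have hz0 : 0 < z := lt_of_lt_of_le hxl0 hz1
    have hex : ∃ n : ℕ, xu < r ^ n * z := by
      obtain ⟨m, hm⟩ := pow_unbounded_of_one_lt (xu / z) hrgt
      exact ⟨m, by rwa [div_lt_iff₀ hz0] at hm⟩
    set N := Nat.find hex with hN
    have hNspec : xu < r ^ N * z := Nat.find_spec hex
    have hNmin : ∀ m, m < N → r ^ m * z ≤ xu := fun m hm => not_lt.mp (Nat.find_min hex hm)
    have hiter : ∀ j, j ≤ N → f^[j] z = r ^ j * z := by
      intro j hj
      induction j with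
      | zero => simp
      | succ i ih =>
        have hiN : i < N := Nat.lt_of_succ_le hj
        rw [Function.iterate_succ_apply', ih (le_of_lt hiN)]
        have ha : xl ≤ r ^ i * z := by
          have h1' : (1:ℝ) ≤ r ^ i := one_le_pow₀ hrgt.le
          exact le_trans hz1 (le_mul_of_one_le_left hz0.le h1')
        have hb : r ^ i * z ≤ xu := hNmin i hiN
        rw [hf2 _ ha hb, pow_succ]
        ring
    have hN0 : N ≠ 0 := by
      intro h
      rw [h] at hNspec
      simp at hNspec
      linarith
    obtain ⟨M, hM⟩ := Nat.exists_eq_succ_of_ne_zero hN0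
    refine ⟨N, ?_, ?_⟩
    · rw [hiter N le_rfl]; exact hNspec.le
    · rw [hiter N le_rfl, hM, pow_succ]
      have hMle : r ^ M * z ≤ xu := hNmin M (by omega)
      have : r * (r ^ M * z) ≤ r * xu := mul_le_mul_of_nonneg_left hMle hr0.le
      calc r ^ M * r * z = r * (r ^ M * z) := by ring
        _ ≤ r * xu := this
        _ ≤ T := hrxuT
  -- escape from the loop region with fuel n
  have Lfuel : ∀ n : ℕ, ∀ z : ℝ, 0 ≤ z → z ≤ xl → xl < z + n * ε →
      ∃ k, xu ≤ f^[k] z ∧ f^[k] z ≤ T := by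
    intro n
    induction n with
    | zero => intro z hz0 hzl habs; exfalso; simp at habs; linarith
    | succ n ih =>
      intro z hz0 hzl hfuel
      have hfz : f z = (1 - gL * z) / (2 * bU) := hf1 z hz0 hzl
      set y : ℝ := (1 - gL * z) / (2 * bU) with hy
      have hylo' : r * xl ≤ y := hylo z hzl
      have hyhi' : y ≤ xm := hyhi z hz0
      have hyxl' : xl < y := lt_of_lt_of_le hrxl hylo'
      by_cases hcase : y ≤ T
      · rcases le_or_gt xu y with hc2 | hc2
        · exact ⟨1, by simpa [hfz] using hc2, by simpa [hfz] using hcase⟩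
        · obtain ⟨k, hk1, hk2⟩ := Lclimb y hyxl'.le hc2
          exact ⟨k + 1, by rwa [Function.iterate_succ_apply, hfz],
            by rwa [Function.iterate_succ_apply, hfz]⟩
      · push_neg at hcase
        have hyxu : xu ≤ y := le_trans (le_of_lt (lt_trans hxuxs hxsT)) hcase.le
        have hffz : f y = xs - q * (y - xs) := hf3' y hyxu hyhi'
        set w : ℝ := xs - q * (y - xs) with hw
        have hw0 : 0 ≤ w := by
          have := mul_le_mul_of_nonneg_left (sub_le_sub_right hyhi' xs) hq0.le
          rw [hw]; linarith [hqxm]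
        have hwxu : w < xu := by
          have := mul_lt_mul_of_pos_left (sub_lt_sub_right hcase xs) hq0
          rw [hw]; linarith [hqT]
        have hiter2 : f^[2] z = w := by
          rw [show (2:ℕ) = 1 + 1 from rfl, Function.iterate_add_apply]
          simp only [Function.iterate_one]
          rw [hfz, hffz]
        have hgrw : z + ε ≤ w := hgrow z hz0 hzl
        rcases le_or_gt w xl with hc3 | hc3
        · have hfuel' : xl < w + n * ε := by
            push_cast at hfuel
            linarith
          obtain ⟨k, hk1, hk2⟩ := ih w hw0 hc3 hfuel'
          refine ⟨k + 2, ?_, ?_⟩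
          · rwa [Function.iterate_add_apply, hiter2]
          · rwa [Function.iterate_add_apply, hiter2]
        · obtain ⟨k, hk1, hk2⟩ := Lclimb w hc3.le hwxu
          refine ⟨k + 2, ?_, ?_⟩
          · rwa [Function.iterate_add_apply, hiter2]
          · rwa [Function.iterate_add_apply, hiter2]
  -- escape from [0, xl] (unbounded fuel)
  have L3 : ∀ z : ℝ, 0 ≤ z → z ≤ xl → ∃ k, xu ≤ f^[k] z ∧ f^[k] z ≤ T := by
    intro z hz0 hzl
    obtain ⟨n, hn⟩ := exists_nat_gt (xl / ε)
    refine Lfuel n z hz0 hzl ?_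
    rw [div_lt_iff₀ heps] at hn
    linarith
  -- the global entry lemma
  have hE : ∀ x : ℝ, 0 ≤ x → ∃ k, xu ≤ f^[k] x ∧ f^[k] x ≤ T := by
    intro x hx0
    rcases le_or_gt x xl with hxc | hxc
    · exact L3 x hx0 hxc
    rcases lt_or_ge x xu with hxc2 | hxc2
    · exact Lclimb x hxc.le hxc2
    rcases le_or_gt x T with hxc3 | hxc3
    · exact ⟨0, hxc2, hxc3⟩
    rcases le_or_gt x xm with hxc4 | hxc4
    · -- T < x ≤ xm : one step of branch 3 throws us below xu
      have hxuq : xu ≤ x := hxc2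
      have hfx : f x = xs - q * (x - xs) := hf3' x hxuq hxc4
      have hfx0 : 0 ≤ f x := by
        have := mul_le_mul_of_nonneg_left (sub_le_sub_right hxc4 xs) hq0.le
        rw [hfx]; linarith [hqxm]
      have hfxu : f x < xu := by
        have := mul_lt_mul_of_pos_left (sub_lt_sub_right hxc3 xs) hq0
        rw [hfx]; linarith [hqT]
      rcases le_or_gt (f x) xl with hc5 | hc5
      · obtain ⟨k, hk1, hk2⟩ := L3 (f x) hfx0 hc5
        exact ⟨k + 1, by rwa [Function.iterate_succ_apply],
          by rwa [Function.iterate_succ_apply]⟩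
      · obtain ⟨k, hk1, hk2⟩ := Lclimb (f x) hc5.le hfxu
        exact ⟨k + 1, by rwa [Function.iterate_succ_apply],
          by rwa [Function.iterate_succ_apply]⟩
    · -- x beyond xm : it maps to 0
      have hfx : f x = 0 := hf4 x hxc4.le
      obtain ⟨k, hk1, hk2⟩ := L3 0 le_rfl hxl0.le
      exact ⟨k + 1, by rwa [Function.iterate_succ_apply, hfx],
        by rwa [Function.iterate_succ_apply, hfx]⟩
  -- invariance and contraction on J = [xu, T]
  have hJstep : ∀ w : ℝ, xu ≤ w → w ≤ T →
      (xu ≤ f w ∧ f w ≤ T) ∧ |f w - xs| = q * |w - xs| := by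
    intro w hw1 hw2
    have hwm : w ≤ xm := le_trans hw2 hTxm.le
    have hfw : f w = xs - q * (w - xs) := hf3' w hw1 hwm
    refine ⟨⟨?_, ?_⟩, ?_⟩
    · have := mul_le_mul_of_nonneg_left (sub_le_sub_right hw2 xs) hq0.le
      rw [hfw]; linarith [hqT]
    · have hmono := mul_le_mul_of_nonneg_left (sub_le_sub_right hw1 xs) hq0.le
      -- f w ≤ xs + q*(xs - xu) and q*(xs - xu) ≤ (xs - xu)/q = T - xs
      have hxsxu : (0:ℝ) ≤ xs - xu := by linarith
      have ha1 : q * (xs - xu) ≤ xs - xu := mul_le_of_le_one_left hxsxu hq1.le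
      have ha2 : q * (q * (xs - xu)) ≤ q * (xs - xu) :=
        mul_le_of_le_one_left (by positivity) hq1.le
      have hqq : q * (q * (xs - xu)) ≤ q * (T - xs) := by
        rw [hqT]; exact le_trans ha2 ha1
      have h2q : q * (xs - xu) ≤ T - xs := le_of_mul_le_mul_left hqq hq0
      rw [hfw]; linarith
    · rw [hfw, show xs - q * (w - xs) - xs = -(q * (w - xs)) by ring, abs_neg, abs_mul,
        abs_of_pos hq0]
  -- the convergence statement
  have hconv : ∀ x : ℝ, 0 ≤ x →
      Filter.Tendsto (fun n => f^[n] x) Filter.atTop (nhds xs) := by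
    intro x hx0
    obtain ⟨N, hN1, hN2⟩ := hE x hx0
    have hind : ∀ k : ℕ, (xu ≤ f^[N + k] x ∧ f^[N + k] x ≤ T) ∧
        |f^[N + k] x - xs| ≤ q ^ k * |f^[N] x - xs| := by
      intro k
      induction k with
      | zero => exact ⟨⟨by simpa using hN1, by simpa using hN2⟩, by simp⟩
      | succ k ih =>
        obtain ⟨⟨ih1, ih2⟩, ih3⟩ := ih
        have hstep := hJstep _ ih1 ih2
        have heq : f^[N + (k + 1)] x = f (f^[N + k] x) := by
          rw [show N + (k + 1) = (N + k) + 1 by omega, Function.iterate_succ_apply']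
        refine ⟨⟨?_, ?_⟩, ?_⟩
        · rw [heq]; exact hstep.1.1
        · rw [heq]; exact hstep.1.2
        · rw [heq, hstep.2, pow_succ]
          calc q * |f^[N + k] x - xs| ≤ q * (q ^ k * |f^[N] x - xs|) :=
                mul_le_mul_of_nonneg_left ih3 hq0.le
            _ = q ^ k * q * |f^[N] x - xs| := by ring
    have htend0 : Filter.Tendsto (fun k : ℕ => q ^ k * |f^[N] x - xs|)
        Filter.atTop (nhds 0) := by
      have := tendsto_pow_atTop_nhds_zero_of_lt_one hq0.le hq1
      simpa using this.mul_const |f^[N] x - xs|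
    have htendd : Filter.Tendsto (fun k : ℕ => |f^[N + k] x - xs|)
        Filter.atTop (nhds 0) :=
      squeeze_zero (fun k => abs_nonneg _) (fun k => (hind k).2) htend0
    have h2' : Filter.Tendsto (fun k : ℕ => f^[N + k] x) Filter.atTop (nhds xs) := by
      rw [tendsto_iff_dist_tendsto_zero]
      simpa [Real.dist_eq] using htendd
    have h3' : Filter.Tendsto (fun k : ℕ => f^[k + N] x) Filter.atTop (nhds xs) := by
      simpa [add_comm] using h2'
    exact (Filter.tendsto_add_atTop_iff_nat N).mp h3'
  -- the fixed point equation
  have hfix : f xs = xs := by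
    rw [hf3' xs hxuxs.le hxsxm.le]
    ring
  refine ⟨hfix, hconv, ?_⟩
  -- no 2-cycles
  intro x hx0 hcyc
  have h2 : f^[2] x = x := by
    rw [show (2:ℕ) = 1 + 1 from rfl, Function.iterate_add_apply]
    simpa using hcyc
  have hper : ∀ n : ℕ, f^[2 * n] x = x := by
    intro n
    induction n with
    | zero => simp
    | succ n ih =>
      rw [show 2 * (n + 1) = 2 * n + 2 by ring, Function.iterate_add_apply, h2, ih]
  have hle : ∀ n : ℕ, n ≤ 2 * n := fun n => by omega
  have hmono : Filter.Tendsto (fun n : ℕ => 2 * n) Filter.atTop Filter.atTop :=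
    Filter.tendsto_atTop_mono hle Filter.tendsto_id
  have hsub : Filter.Tendsto (fun n : ℕ => f^[2 * n] x) Filter.atTop (nhds xs) :=
    (hconv x hx0).comp hmono
  have hconst : Filter.Tendsto (fun _ : ℕ => x) Filter.atTop (nhds xs) := by
    simpa [hper] using hsub
  exact tendsto_nhds_unique tendsto_const_nhds hconst
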